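/- Theorem 6.2 (bounded projection implies linear growth): Let X be a δ-hyperbolic geodesic metric space and let h be a hyperbolic isometry of X. If a nonempty subset Y ⊆ X has bounded projection with respect to h, then there is a constant K ≥ 0 such that for all n ∈ ℕ, |d(Y, hⁿ(Y)) − n·α(h)| ≤ K, where hⁿ(Y) = {hⁿ(y) : y ∈ Y}. -/

import Mathlib

/-- `γ` is a geodesic segment from `u` to `v`: an isometric embedding of
`[0, dist u v]` sending the endpoints to `u` and `v`. -/
def IsGeodesicSegment {X : Type*} [MetricSpace X] (γ : ℝ → X) (u v : X) : Prop :=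
  γ 0 = u ∧ γ (dist u v) = v ∧
    ∀ s ∈ Set.Icc (0 : ℝ) (dist u v), ∀ t ∈ Set.Icc (0 : ℝ) (dist u v),
      dist (γ s) (γ t) = |s - t|

/-- A metric space is geodesic if every pair of points is joined by a geodesic. -/
def GeodesicSpace (X : Type*) [MetricSpace X] : Prop :=
  ∀ u v : X, ∃ γ : ℝ → X, IsGeodesicSegment γ u v

/-- `X` is `δ`-hyperbolic: every geodesic triangle is `δ`-thin, i.e. each side is
contained in the closed `δ`-neighborhood of the union of the other two sides. -/
def DeltaHyperbolic (X : Type*) [MetricSpace X] (δ : ℝ) : Prop :=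
  ∀ (x y z : X) (γ₁ γ₂ γ₃ : ℝ → X),
    IsGeodesicSegment γ₁ x y → IsGeodesicSegment γ₂ y z → IsGeodesicSegment γ₃ x z →
    ∀ p ∈ γ₃ '' Set.Icc (0 : ℝ) (dist x z),
      ∃ q ∈ (γ₁ '' Set.Icc (0 : ℝ) (dist x y)) ∪ (γ₂ '' Set.Icc (0 : ℝ) (dist y z)),
        dist p q ≤ δ

/-- `U` is quasi-convex with constant `R`: every geodesic segment between points of `U`
lies in the closed `R`-neighborhood of `U`. -/
def QuasiConvexWith {X : Type*} [MetricSpace X] (U : Set X) (R : ℝ) : Prop :=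
  ∀ u ∈ U, ∀ v ∈ U, ∀ γ : ℝ → X, IsGeodesicSegment γ u v →
    ∀ p ∈ γ '' Set.Icc (0 : ℝ) (dist u v), ∃ w ∈ U, dist p w ≤ R

/-- The quasi-projection of `y` to `U`: the points of `U` which are, within an error
of `ε`, closest to `y`. -/
noncomputable def quasiProj {X : Type*} [MetricSpace X] (U : Set X) (ε : ℝ) (y : X) :
    Set X :=
  {y' ∈ U | dist y y' ≤ Metric.infDist y U + ε}

/-- The average displacement of the isometry `h`, computed at the point `x`:
`inf_{n ≥ 1} dist x (hⁿ x) / n` (this equals `lim_n dist x (hⁿ x) / n` and is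
independent of `x`). -/
noncomputable def avgDisp {X : Type*} [MetricSpace X] (h : X ≃ᵢ X) (x : X) : ℝ :=
  ⨅ n : ℕ+, dist x ((⇑h)^[(n : ℕ)] x) / (n : ℝ)

/-- `L` is an invariant axis for `h` through the orbit of `x`, built from the geodesic
segment `γ` from `x` to `h x`:  `L t = hᵏ (γ (t - k·d₁))` for `t ∈ [k·d₁, (k+1)·d₁]`,
where `d₁ = dist x (h x)`. -/
def IsInvariantAxis {X : Type*} [MetricSpace X] (h : X ≃ᵢ X) (x : X) (γ : ℝ → X)
    (L : ℝ → X) : Prop :=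
  IsGeodesicSegment γ x (h x) ∧
    ∀ k : ℤ, ∀ t ∈ Set.Icc ((k : ℝ) * dist x (h x)) (((k : ℝ) + 1) * dist x (h x)),
      L t = (h ^ k) (γ (t - (k : ℝ) * dist x (h x)))

/-- The distance between two subsets of a metric space. -/
noncomputable def setDist {X : Type*} [MetricSpace X] (Y Z : Set X) : ℝ :=
  sInf (Set.image2 dist Y Z)

open Metric Set

section helpers
variable {X : Type*} [MetricSpace X] {γ : ℝ → X} {u v : X}

lemma le_infDist' {s : Set X} {x : X} {b : ℝ} (hs : s.Nonempty)
    (H : ∀ y ∈ s, b ≤ dist x y) : b ≤ infDist x s :=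
  le_of_not_gt fun hlt => by
    obtain ⟨y, hy, hd⟩ := (infDist_lt_iff hs).mp hlt
    exact absurd (H y hy) (not_le.mpr hd)

/-- image of a geodesic -/
def GImg (γ : ℝ → X) (u v : X) : Set X := γ '' Set.Icc (0 : ℝ) (dist u v)

lemma geod_const (u : X) : IsGeodesicSegment (fun _ => u) u u := by
  refine ⟨rfl, rfl, ?_⟩
  intro s hs t ht
  simp only [dist_self] at hs ht ⊢
  have h1 : s = 0 := le_antisymm hs.2 hs.1
  have h2 : t = 0 := le_antisymm ht.2 ht.1
  simp [h1, h2]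

lemma mem_GImg_left (hγ : IsGeodesicSegment γ u v) : u ∈ GImg γ u v :=
  ⟨0, ⟨le_refl _, dist_nonneg⟩, hγ.1⟩

lemma mem_GImg_right (hγ : IsGeodesicSegment γ u v) : v ∈ GImg γ u v :=
  ⟨dist u v, ⟨dist_nonneg, le_refl _⟩, hγ.2.1⟩

lemma GImg_nonempty (hγ : IsGeodesicSegment γ u v) : (GImg γ u v).Nonempty :=
  ⟨u, mem_GImg_left hγ⟩

lemma geod_dist_left (hγ : IsGeodesicSegment γ u v) {s : ℝ}
    (hs : s ∈ Set.Icc (0 : ℝ) (dist u v)) : dist u (γ s) = s := by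
  have h0 : (0:ℝ) ∈ Set.Icc (0:ℝ) (dist u v) := ⟨le_refl _, dist_nonneg⟩
  have := hγ.2.2 0 h0 s hs
  rw [hγ.1] at this
  rw [this, abs_of_nonpos (by linarith [hs.1])]
  ring

lemma geod_dist_right (hγ : IsGeodesicSegment γ u v) {s : ℝ}
    (hs : s ∈ Set.Icc (0 : ℝ) (dist u v)) : dist (γ s) v = dist u v - s := by
  have h0 : dist u v ∈ Set.Icc (0:ℝ) (dist u v) := ⟨dist_nonneg, le_refl _⟩
  have := hγ.2.2 s hs _ h0
  rw [hγ.2.1] at this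
  rw [this, abs_of_nonpos (by linarith [hs.2])]
  ring

lemma geod_sum (hγ : IsGeodesicSegment γ u v) {q : X} (hq : q ∈ GImg γ u v) :
    dist u q + dist q v = dist u v := by
  obtain ⟨s, hs, rfl⟩ := hq
  rw [geod_dist_left hγ hs, geod_dist_right hγ hs]
  ring

lemma geod_reverse (hγ : IsGeodesicSegment γ u v) :
    IsGeodesicSegment (fun t => γ (dist u v - t)) v u ∧
      GImg (fun t => γ (dist u v - t)) v u = GImg γ u v := by
  have hd : dist v u = dist u v := dist_comm v u
  constructor
  · refine ⟨by simpa using hγ.2.1, by simp [hd, hγ.1], ?_⟩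
    intro s hs t ht
    rw [hd] at hs ht
    have := hγ.2.2 (dist u v - s) ⟨by linarith [hs.2], by linarith [hs.1]⟩
      (dist u v - t) ⟨by linarith [ht.2], by linarith [ht.1]⟩
    rw [this, abs_sub_comm]
    congr 1
    ring
  · unfold GImg
    rw [hd]
    ext p
    constructor
    · rintro ⟨s, hs, rfl⟩
      exact ⟨dist u v - s, ⟨by linarith [hs.2], by linarith [hs.1]⟩, rfl⟩
    · rintro ⟨s, hs, rfl⟩
      exact ⟨dist u v - s, ⟨by linarith [hs.2], by linarith [hs.1]⟩, by simp⟩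

/-- subsegment of a geodesic between two of its points -/
lemma geod_subsegment (hγ : IsGeodesicSegment γ u v) {s₁ s₂ : ℝ}
    (h₁ : s₁ ∈ Set.Icc (0:ℝ) (dist u v)) (h₂ : s₂ ∈ Set.Icc (0:ℝ) (dist u v)) :
    ∃ σ : ℝ → X, IsGeodesicSegment σ (γ s₁) (γ s₂) ∧
      GImg σ (γ s₁) (γ s₂) ⊆ GImg γ u v := by
  have hdist : dist (γ s₁) (γ s₂) = |s₁ - s₂| := hγ.2.2 s₁ h₁ s₂ h₂
  rcases le_total s₁ s₂ with hle | hle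
  · refine ⟨fun t => γ (s₁ + t), ⟨by simp, ?_, ?_⟩, ?_⟩
    · rw [hdist, abs_of_nonpos (by linarith)]
      congr 1; ring
    · intro a ha b hb
      rw [hdist, abs_of_nonpos (by linarith)] at ha hb
      have := hγ.2.2 (s₁ + a) ⟨by linarith [h₁.1, ha.1], by linarith [h₂.2, ha.2]⟩
        (s₁ + b) ⟨by linarith [h₁.1, hb.1], by linarith [h₂.2, hb.2]⟩
      rw [this]; congr 1; ring
    · rintro p ⟨a, ha, rfl⟩
      rw [hdist, abs_of_nonpos (by linarith)] at ha
      exact ⟨s₁ + a, ⟨by linarith [h₁.1, ha.1], by linarith [h₂.2, ha.2]⟩, rfl⟩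
  · refine ⟨fun t => γ (s₁ - t), ⟨by simp, ?_, ?_⟩, ?_⟩
    · rw [hdist, abs_of_nonneg (by linarith)]
      congr 1; ring
    · intro a ha b hb
      rw [hdist, abs_of_nonneg (by linarith)] at ha hb
      have := hγ.2.2 (s₁ - a) ⟨by linarith [h₂.1, ha.2], by linarith [h₁.2, ha.1]⟩
        (s₁ - b) ⟨by linarith [h₂.1, hb.2], by linarith [h₁.2, hb.1]⟩
      rw [this, abs_sub_comm]; congr 1; ring
    · rintro p ⟨a, ha, rfl⟩
      rw [hdist, abs_of_nonneg (by linarith)] at ha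
      exact ⟨s₁ - a, ⟨by linarith [h₂.1, ha.2], by linarith [h₁.2, ha.1]⟩, rfl⟩

end helpers

section hyp
variable {X : Type*} [MetricSpace X] {δ : ℝ}

/-- geodesics between two points of a geodesic stay δ-close to it -/
lemma qc0 (hhyp : DeltaHyperbolic X δ) {u v p z : X} {g : ℝ → X} (hg : IsGeodesicSegment g u v)
    (hp : p ∈ GImg g u v) (hz : z ∈ GImg g u v)
    {τ : ℝ → X} (hτ : IsGeodesicSegment τ p z) :
    ∀ w ∈ GImg τ p z, infDist w (GImg g u v) ≤ δ := by
  intro w hw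
  obtain ⟨s₁, hs₁, rfl⟩ := hp
  obtain ⟨s₂, hs₂, rfl⟩ := hz
  obtain ⟨σ, hσ, hσsub⟩ := geod_subsegment hg hs₁ hs₂
  obtain ⟨q, hq, hdq⟩ := hhyp (g s₁) (g s₁) (g s₂) (fun _ => g s₁) σ τ
    (geod_const _) hσ hτ w hw
  rcases hq with hq | hq
  · obtain ⟨a, _, rfl⟩ := hq
    calc infDist w (GImg g u v) ≤ dist w ((fun _ => g s₁) a) :=
          infDist_le_dist_of_mem ⟨s₁, hs₁, rfl⟩
      _ ≤ δ := hdq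
  · exact le_trans (infDist_le_dist_of_mem (hσsub hq)) hdq

/-- quadrilateral thinness -/
lemma quad_thin (hδ : 0 ≤ δ) (hgeo : GeodesicSpace X) (hhyp : DeltaHyperbolic X δ) {a b c d : X} {γab γbc γcd γad : ℝ → X}
    (h1 : IsGeodesicSegment γab a b) (h2 : IsGeodesicSegment γbc b c)
    (h3 : IsGeodesicSegment γcd c d) (h4 : IsGeodesicSegment γad a d) :
    ∀ w ∈ GImg γad a d,
      ∃ q ∈ GImg γab a b ∪ GImg γbc b c ∪ GImg γcd c d, dist w q ≤ 2 * δ := by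
  intro w hw
  obtain ⟨e, he⟩ := hgeo b d
  obtain ⟨q₁, hq₁, hd₁⟩ := hhyp a b d γab e γad h1 he h4 w hw
  rcases hq₁ with hq₁ | hq₁
  · exact ⟨q₁, Or.inl (Or.inl hq₁), by linarith⟩
  · obtain ⟨q₂, hq₂, hd₂⟩ := hhyp b c d γbc γcd e h2 h3 he q₁ hq₁
    refine ⟨q₂, ?_, by calc dist w q₂ ≤ dist w q₁ + dist q₁ q₂ := dist_triangle _ _ _
      _ ≤ 2 * δ := by linarith⟩
    rcases hq₂ with hq₂ | hq₂
    · exact Or.inl (Or.inr hq₂)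
    · exact Or.inr hq₂

/-- projection inequality on geodesics -/
lemma proj_ineq (hδ : 0 ≤ δ) (hgeo : GeodesicSpace X) (hhyp : DeltaHyperbolic X δ) {u v : X} {g : ℝ → X} (hg : IsGeodesicSegment g u v)
    {y p z : X} (hp : p ∈ GImg g u v) (hz : z ∈ GImg g u v) {ε' : ℝ} (hε' : 0 ≤ ε')
    (hproj : dist y p ≤ infDist y (GImg g u v) + ε') :
    dist y p + dist p z - (4 * δ + 2 * ε' + 2) ≤ dist y z := by
  set b := dist p z with hb
  by_cases hcase : b ≤ 2 * δ + ε' + 1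
  · have := dist_triangle y z p
    have : dist y p ≤ dist y z + b := by
      calc dist y p ≤ dist y z + dist z p := dist_triangle y z p
        _ = dist y z + b := by rw [dist_comm z p]
    linarith
  · push_neg at hcase
    obtain ⟨s₂, hs₂, rfl⟩ := hp
    obtain ⟨s₁, hs₁, rfl⟩ := hz
    -- subsegment from z = g s₁ to p = g s₂
    obtain ⟨σ, hσ, hσsub⟩ := geod_subsegment hg hs₁ hs₂
    set t := b - (ε' + 2 * δ + 1) with ht
    have hbd : dist (g s₁) (g s₂) = b := by rw [hb, dist_comm]
    have htmem : t ∈ Set.Icc (0:ℝ) (dist (g s₁) (g s₂)) := by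
      rw [hbd]; constructor <;> [linarith; linarith]
    set w := σ t with hw
    have hwImg : w ∈ GImg σ (g s₁) (g s₂) := ⟨t, htmem, rfl⟩
    have hwg : w ∈ GImg g u v := hσsub hwImg
    have hzw : dist (g s₁) w = t := geod_dist_left hσ htmem
    have hwp : dist w (g s₂) = b - t := by
      rw [geod_dist_right hσ htmem, hbd]
    have hyw : dist (g s₂) y - ε' ≤ dist y w := by
      have h1 : infDist y (GImg g u v) ≤ dist y w := infDist_le_dist_of_mem hwg
      rw [dist_comm (g s₂) y]
      linarith
    obtain ⟨γ₁, hγ₁⟩ := hgeo (g s₁) y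
    obtain ⟨γ₂, hγ₂⟩ := hgeo y (g s₂)
    obtain ⟨q, hq, hdq⟩ := hhyp (g s₁) y (g s₂) γ₁ γ₂ σ hγ₁ hγ₂ hσ w hwImg
    rcases hq with hq | hq
    · -- q on [z, y]
      have hsum : dist (g s₁) q + dist q y = dist (g s₁) y := geod_sum hγ₁ hq
      have h1 : t - δ ≤ dist (g s₁) q := by
        linarith [dist_triangle (g s₁) q w, dist_comm q w, hdq, hzw.ge, hzw.le]
      have h2 : dist (g s₂) y - ε' - δ ≤ dist q y := by
        linarith [dist_triangle y q w, dist_comm q w, dist_comm y q, hdq, hyw]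
      have hc1 : dist y (g s₁) = dist (g s₁) y := dist_comm _ _
      have hc2 : dist y (g s₂) = dist (g s₂) y := dist_comm _ _
      rw [hb]
      linarith
    · -- q on [y, p] : contradiction
      exfalso
      have hsum : dist y q + dist q (g s₂) = dist y (g s₂) := geod_sum hγ₂ hq
      have h1 : dist y (g s₂) - ε' - δ ≤ dist y q := by
        linarith [dist_triangle y q w, dist_comm q w, hdq, hyw, dist_comm y (g s₂)]
      have h2 : dist q (g s₂) ≤ ε' + δ := by linarith
      have h3 := dist_triangle w q (g s₂)
      rw [hwp] at h3
      have h4 : dist w q ≤ δ := by linarith [dist_comm w q, hdq]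
      linarith
end hyp

section contraction
variable {X : Type*} [MetricSpace X] {δ : ℝ}

lemma contraction (hδ : 0 ≤ δ) (hgeo : GeodesicSpace X) (hhyp : DeltaHyperbolic X δ)
    {w₁ w₂ : X} {g : ℝ → X} (hg : IsGeodesicSegment g w₁ w₂)
    {y₁ y₂ p₁ p₂ : X} (hp₁m : p₁ ∈ GImg g w₁ w₂) (hp₂m : p₂ ∈ GImg g w₁ w₂)
    (hp₁ : dist y₁ p₁ ≤ infDist y₁ (GImg g w₁ w₂) + 1)
    (hp₂ : dist y₂ p₂ ≤ infDist y₂ (GImg g w₁ w₂) + 1)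
    (hfar : dist y₁ y₂ + 3 * δ + 1 ≤ infDist y₁ (GImg g w₁ w₂)) :
    dist p₁ p₂ ≤ 10 * δ + 4 := by
  set Cimg := GImg g w₁ w₂ with hCimg
  obtain ⟨τ, hτ⟩ := hgeo p₁ p₂
  obtain ⟨γ₁, hγ₁⟩ := hgeo p₁ y₁
  obtain ⟨σ, hσ⟩ := hgeo y₁ y₂
  obtain ⟨γ₃, hγ₃⟩ := hgeo y₂ p₂
  set ℓ₂ := dist p₁ p₂ with hℓ₂
  have hclose : ∀ w ∈ GImg τ p₁ p₂, infDist w Cimg ≤ δ := qc0 hhyp hg hp₁m hp₂m hτ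
  have hcover : ∀ t ∈ Set.Icc (0:ℝ) ℓ₂,
      (∃ q ∈ GImg γ₁ p₁ y₁, dist (τ t) q ≤ 2 * δ) ∨
      (∃ q ∈ GImg γ₃ y₂ p₂, dist (τ t) q ≤ 2 * δ) := by
    intro t ht
    obtain ⟨q, hq, hdq⟩ := quad_thin hδ hgeo hhyp hγ₁ hσ hγ₃ hτ (τ t) ⟨t, ht, rfl⟩
    rcases hq with (hq | hq) | hq
    · exact Or.inl ⟨q, hq, hdq⟩
    · exfalso
      have hsum : dist y₁ q + dist q y₂ = dist y₁ y₂ := geod_sum hσ hq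
      have h1 : dist y₁ q ≤ dist y₁ y₂ := by linarith [dist_nonneg (x := q) (y := y₂)]
      have h2 : infDist y₁ Cimg ≤ infDist q Cimg + dist y₁ q :=
        infDist_le_infDist_add_dist
      have h3 : infDist q Cimg ≤ infDist (τ t) Cimg + dist q (τ t) :=
        infDist_le_infDist_add_dist
      have h4 : infDist (τ t) Cimg ≤ δ := hclose (τ t) ⟨t, ht, rfl⟩
      have h5 : dist q (τ t) = dist (τ t) q := dist_comm _ _
      linarith
    · exact Or.inr ⟨q, hq, hdq⟩
  set S := {t : ℝ | t ∈ Set.Icc (0:ℝ) ℓ₂ ∧ ∃ q ∈ GImg γ₁ p₁ y₁, dist (τ t) q ≤ 2 * δ}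
    with hS
  have h0S : (0:ℝ) ∈ S := by
    refine ⟨⟨le_refl _, dist_nonneg⟩, p₁, mem_GImg_left hγ₁, ?_⟩
    rw [hτ.1, dist_self]; linarith
  have hSne : S.Nonempty := ⟨0, h0S⟩
  have hSbdd : BddAbove S := ⟨ℓ₂, fun t ht => ht.1.2⟩
  set u' := sSup S with hu'
  have hu'le : u' ≤ ℓ₂ := csSup_le hSne fun t ht => ht.1.2
  have hu'0 : (0:ℝ) ≤ u' := le_csSup hSbdd h0S
  obtain ⟨t₁, ht₁S, ht₁gt⟩ := exists_lt_of_lt_csSup hSne (show u' - 1 < u' by linarith)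
  have ht₁le : t₁ ≤ u' := le_csSup hSbdd ht₁S
  obtain ⟨q₁, hq₁mem, hq₁d⟩ := ht₁S.2
  have ht₁mem : t₁ ∈ Set.Icc (0:ℝ) ℓ₂ := ht₁S.1
  -- find t₂, q₂ on the other side
  obtain ⟨t₂, ht₂mem, ht₂near, q₂, hq₂mem, hq₂d⟩ :
      ∃ t₂, t₂ ∈ Set.Icc (0:ℝ) ℓ₂ ∧ |t₁ - t₂| ≤ 2 ∧
        ∃ q₂ ∈ GImg γ₃ y₂ p₂, dist (τ t₂) q₂ ≤ 2 * δ := by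
    by_cases hc : u' < ℓ₂
    · set t₂ := min (u' + 1) ℓ₂ with ht₂
      have ht₂gt : u' < t₂ := lt_min (by linarith) hc
      have ht₂mem : t₂ ∈ Set.Icc (0:ℝ) ℓ₂ := ⟨by positivity, min_le_right _ _⟩
      have ht₂near : |t₁ - t₂| ≤ 2 := by
        rw [abs_le]
        constructor
        · have := min_le_left (u' + 1) ℓ₂; linarith
        · linarith [ht₂gt, ht₁le]
      rcases hcover t₂ ht₂mem with ⟨q, hq, hdq⟩ | ⟨q, hq, hdq⟩
      · exfalso
        have : t₂ ∈ S := ⟨ht₂mem, q, hq, hdq⟩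
        have := le_csSup hSbdd this
        linarith
      · exact ⟨t₂, ht₂mem, ht₂near, q, hq, hdq⟩
    · push_neg at hc
      have hu'eq : u' = ℓ₂ := le_antisymm hu'le hc
      refine ⟨ℓ₂, ⟨dist_nonneg, le_refl _⟩, ?_, p₂, mem_GImg_right hγ₃, ?_⟩
      · rw [abs_le]; constructor <;> [linarith [ht₁mem.2]; linarith [ht₁gt, hu'eq]]
      · rw [show τ ℓ₂ = p₂ from hτ.2.1, dist_self]; linarith
  have hττ : dist (τ t₁) (τ t₂) = |t₁ - t₂| := hτ.2.2 t₁ ht₁mem t₂ ht₂mem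
  -- e1
  have hsum1 : dist p₁ q₁ + dist q₁ y₁ = dist p₁ y₁ := geod_sum hγ₁ hq₁mem
  have iq1 : infDist q₁ Cimg ≤ 3 * δ := by
    have h3 : infDist q₁ Cimg ≤ infDist (τ t₁) Cimg + dist q₁ (τ t₁) :=
      infDist_le_infDist_add_dist
    have h4 : infDist (τ t₁) Cimg ≤ δ := hclose (τ t₁) ⟨t₁, ht₁mem, rfl⟩
    have h5 : dist q₁ (τ t₁) = dist (τ t₁) q₁ := dist_comm _ _
    linarith
  have iy1 : infDist y₁ Cimg ≤ infDist q₁ Cimg + dist y₁ q₁ := infDist_le_infDist_add_dist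
  have e1 : dist p₁ q₁ ≤ 3 * δ + 1 := by
    have hc1 : dist y₁ q₁ = dist q₁ y₁ := dist_comm _ _
    have hc2 : dist y₁ p₁ = dist p₁ y₁ := dist_comm _ _
    linarith
  -- e2
  have hsum2 : dist y₂ q₂ + dist q₂ p₂ = dist y₂ p₂ := geod_sum hγ₃ hq₂mem
  have iq2 : infDist q₂ Cimg ≤ 3 * δ := by
    have h3 : infDist q₂ Cimg ≤ infDist (τ t₂) Cimg + dist q₂ (τ t₂) :=
      infDist_le_infDist_add_dist
    have h4 : infDist (τ t₂) Cimg ≤ δ := hclose (τ t₂) ⟨t₂, ht₂mem, rfl⟩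
    have h5 : dist q₂ (τ t₂) = dist (τ t₂) q₂ := dist_comm _ _
    linarith
  have iy2 : infDist y₂ Cimg ≤ infDist q₂ Cimg + dist y₂ q₂ := infDist_le_infDist_add_dist
  have e2 : dist q₂ p₂ ≤ 3 * δ + 1 := by linarith
  calc dist p₁ p₂ ≤ dist p₁ q₁ + dist q₁ p₂ := dist_triangle _ _ _
    _ ≤ dist p₁ q₁ + (dist q₁ (τ t₁) + dist (τ t₁) p₂) := by
        linarith [dist_triangle q₁ (τ t₁) p₂]
    _ ≤ dist p₁ q₁ + (dist q₁ (τ t₁) + (dist (τ t₁) (τ t₂) + dist (τ t₂) p₂)) := by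
        linarith [dist_triangle (τ t₁) (τ t₂) p₂]
    _ ≤ dist p₁ q₁ + (dist q₁ (τ t₁) + (dist (τ t₁) (τ t₂) + (dist (τ t₂) q₂ + dist q₂ p₂))) := by
        linarith [dist_triangle (τ t₂) q₂ p₂]
    _ ≤ 10 * δ + 4 := by
        have hc : dist q₁ (τ t₁) = dist (τ t₁) q₁ := dist_comm _ _
        rw [hττ]
        linarith
end contraction

section axisfacts
variable {X : Type*} [MetricSpace X]

lemma iso_zpow_apply (h : X ≃ᵢ X) (k l : ℤ) (a : X) :
    (h ^ (k + l)) a = (h ^ k) ((h ^ l) a) := by rw [zpow_add]; rfl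

lemma iso_zpow_natCast_apply (h : X ≃ᵢ X) (n : ℕ) (a : X) :
    (h ^ (n : ℤ)) a = (⇑h)^[n] a := by
  induction n generalizing a with
  | zero => rw [Nat.cast_zero, zpow_zero]; rfl
  | succ n ih =>
    rw [Nat.cast_succ, zpow_add, zpow_one, Function.iterate_succ_apply]
    exact ih (h a)

lemma iso_iterate_dist (h : X ≃ᵢ X) (n : ℕ) (a b : X) :
    dist ((⇑h)^[n] a) ((⇑h)^[n] b) = dist a b := by
  induction n generalizing a b with
  | zero => rfl
  | succ n ih =>
    rw [Function.iterate_succ_apply, Function.iterate_succ_apply]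
    rw [ih (h a) (h b), h.dist_eq]

lemma iso_zpow_dist (h : X ≃ᵢ X) (k : ℤ) (a b : X) :
    dist ((h ^ k) a) ((h ^ k) b) = dist a b := (h ^ k).dist_eq a b

-- average displacement facts
lemma avgDisp_nonneg (h : X ≃ᵢ X) (x : X) : 0 ≤ avgDisp h x := by
  apply le_ciInf
  intro n
  positivity

lemma avgDisp_le (h : X ≃ᵢ X) (x : X) (n : ℕ+) :
    avgDisp h x ≤ dist x ((⇑h)^[(n:ℕ)] x) / (n : ℝ) := by
  apply ciInf_le
  refine ⟨0, ?_⟩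
  rintro r ⟨m, rfl⟩
  positivity

lemma nsmul_avgDisp_le (h : X ≃ᵢ X) (x : X) (n : ℕ) :
    (n : ℝ) * avgDisp h x ≤ dist x ((⇑h)^[n] x) := by
  rcases Nat.eq_zero_or_pos n with rfl | hn
  · simp
  · have h1 := avgDisp_le h x ⟨n, hn⟩
    have hn' : (0:ℝ) < n := by exact_mod_cast hn
    have h1' : avgDisp h x ≤ dist x ((⇑h)^[n] x) / (n : ℝ) := h1
    rw [le_div_iff₀ hn'] at h1'
    replace h1 := h1'
    linarith [mul_comm (n:ℝ) (avgDisp h x)]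

lemma dist_iterate_subadd (h : X ≃ᵢ X) (x : X) (n m : ℕ) :
    dist x ((⇑h)^[n + m] x) ≤ dist x ((⇑h)^[n] x) + dist x ((⇑h)^[m] x) := by
  have h1 : (⇑h)^[n + m] x = (⇑h)^[n] ((⇑h)^[m] x) := by
    rw [Function.iterate_add_apply]
  calc dist x ((⇑h)^[n + m] x) ≤ dist x ((⇑h)^[n] x) + dist ((⇑h)^[n] x) ((⇑h)^[n+m] x) :=
        dist_triangle _ _ _
    _ = dist x ((⇑h)^[n] x) + dist x ((⇑h)^[m] x) := by
        rw [h1, iso_iterate_dist]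

variable (h : X ≃ᵢ X) (x : X) {γ L : ℝ → X}

lemma floor_mem_block {d₁ : ℝ} (hd₁ : 0 < d₁) (t : ℝ) :
    t ∈ Set.Icc ((⌊t / d₁⌋ : ℝ) * d₁) (((⌊t / d₁⌋ : ℝ) + 1) * d₁) := by
  constructor
  · have := Int.floor_le (t / d₁)
    calc ((⌊t / d₁⌋ : ℝ)) * d₁ ≤ (t / d₁) * d₁ := by
          exact mul_le_mul_of_nonneg_right this hd₁.le
      _ = t := by field_simp
  · have := (Int.lt_floor_add_one (t / d₁)).le
    calc t = (t / d₁) * d₁ := by field_simp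
      _ ≤ ((⌊t / d₁⌋ : ℝ) + 1) * d₁ := mul_le_mul_of_nonneg_right this hd₁.le

lemma L_block (hL : IsInvariantAxis h x γ L) {d₁ : ℝ} (hd : d₁ = dist x (h x))
    (hd₁ : 0 < d₁) (t : ℝ) :
    L t = (h ^ ⌊t / d₁⌋) (γ (t - (⌊t / d₁⌋ : ℝ) * d₁)) := by
  subst hd
  exact hL.2 ⌊t / dist x (h x)⌋ t (floor_mem_block hd₁ t)

lemma L_zero (hL : IsInvariantAxis h x γ L) {d₁ : ℝ} (hd : d₁ = dist x (h x))
    (hd₁ : 0 < d₁) : L 0 = x := by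
  have h0 : (0:ℝ) / d₁ = 0 := by rw [zero_div]
  have := L_block h x hL hd hd₁ 0
  rw [h0] at this
  simp only [Int.floor_zero, Int.cast_zero, zero_mul, sub_zero, zpow_zero] at this
  rw [this, hL.1.1]
  rfl

lemma L_same_block (hL : IsInvariantAxis h x γ L) {d₁ : ℝ} (hd : d₁ = dist x (h x))
    (k : ℤ) {s t : ℝ} (hs : s ∈ Set.Icc ((k:ℝ) * d₁) (((k:ℝ) + 1) * d₁))
    (ht : t ∈ Set.Icc ((k:ℝ) * d₁) (((k:ℝ) + 1) * d₁)) :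
    dist (L s) (L t) = |s - t| := by
  have e1 : L s = (h ^ k) (γ (s - (k:ℝ) * d₁)) := by subst hd; exact hL.2 k s hs
  have e2 : L t = (h ^ k) (γ (t - (k:ℝ) * d₁)) := by subst hd; exact hL.2 k t ht
  rw [e1, e2, iso_zpow_dist]
  have hmem1 : s - (k:ℝ) * d₁ ∈ Set.Icc (0:ℝ) (dist x (h x)) := by
    subst hd
    constructor <;> [linarith [hs.1]; linarith [hs.2]]
  have hmem2 : t - (k:ℝ) * d₁ ∈ Set.Icc (0:ℝ) (dist x (h x)) := by
    subst hd
    constructor <;> [linarith [ht.1]; linarith [ht.2]]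
  rw [hL.1.2.2 _ hmem1 _ hmem2]
  congr 1
  ring

lemma L_lipschitz_aux (hL : IsInvariantAxis h x γ L) {d₁ : ℝ} (hd : d₁ = dist x (h x))
    (hd₁ : 0 < d₁) :
    ∀ n : ℕ, ∀ s t : ℝ, s ≤ t → ⌊t / d₁⌋ ≤ ⌊s / d₁⌋ + n → dist (L s) (L t) ≤ t - s := by
  intro n
  induction n with
  | zero =>
    intro s t hst hfl
    have hmono : ⌊s / d₁⌋ ≤ ⌊t / d₁⌋ := Int.floor_le_floor (by gcongr)
    have hk : ⌊s / d₁⌋ = ⌊t / d₁⌋ := le_antisymm hmono (by omega)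
    have hsmem := floor_mem_block hd₁ s
    have htmem := floor_mem_block hd₁ t
    rw [hk] at hsmem
    have := L_same_block h x hL hd ⌊t / d₁⌋ hsmem htmem
    rw [this, abs_of_nonpos (by linarith)]
    linarith
  | succ n ih =>
    intro s t hst hfl
    by_cases hfl2 : ⌊t / d₁⌋ ≤ ⌊s / d₁⌋ + n
    · exact ih s t hst hfl2
    · push_neg at hfl2
      set k := ⌊s / d₁⌋ with hk
      set m := ((k:ℝ) + 1) * d₁ with hm
      have hsmem := floor_mem_block hd₁ s
      have htmem := floor_mem_block hd₁ t
      have hsm : s ≤ m := hsmem.2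
      have hkt : (k + 1 : ℤ) ≤ ⌊t / d₁⌋ := by omega
      have hmt : m ≤ t := by
        have h1 : ((k:ℝ) + 1) ≤ (⌊t / d₁⌋ : ℝ) := by exact_mod_cast hkt
        have h2 : (⌊t / d₁⌋ : ℝ) * d₁ ≤ t := htmem.1
        calc m = ((k:ℝ) + 1) * d₁ := hm
          _ ≤ (⌊t / d₁⌋ : ℝ) * d₁ := mul_le_mul_of_nonneg_right h1 hd₁.le
          _ ≤ t := h2
      have hmmem : m ∈ Set.Icc ((k:ℝ) * d₁) (((k:ℝ) + 1) * d₁) := by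
        constructor
        · rw [hm]; nlinarith
        · exact le_refl _
      have e1 : dist (L s) (L m) = |s - m| := L_same_block h x hL hd k hsmem hmmem
      have hfloorm : ⌊m / d₁⌋ = k + 1 := by
        have : m / d₁ = ((k + 1 : ℤ) : ℝ) := by
          rw [hm]; push_cast; field_simp
        rw [this, Int.floor_intCast]
      have e2 : dist (L m) (L t) ≤ t - m := by
        apply ih m t hmt
        omega
      calc dist (L s) (L t) ≤ dist (L s) (L m) + dist (L m) (L t) := dist_triangle _ _ _
        _ ≤ |s - m| + (t - m) := by linarith [e1.le]
        _ = (m - s) + (t - m) := by rw [abs_of_nonpos (by linarith)]; ring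
        _ = t - s := by ring

lemma L_lip (hL : IsInvariantAxis h x γ L) {d₁ : ℝ} (hd : d₁ = dist x (h x))
    (hd₁ : 0 < d₁) {s t : ℝ} (hst : s ≤ t) : dist (L s) (L t) ≤ t - s := by
  apply L_lipschitz_aux h x hL hd hd₁ (⌊t / d₁⌋ - ⌊s / d₁⌋).toNat s t hst
  omega

lemma L_dist_le (hL : IsInvariantAxis h x γ L) {d₁ : ℝ} (hd : d₁ = dist x (h x))
    (hd₁ : 0 < d₁) (s t : ℝ) : dist (L s) (L t) ≤ |s - t| := by
  rcases le_total s t with hst | hst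
  · rw [abs_of_nonpos (by linarith)]
    linarith [L_lip h x hL hd hd₁ hst]
  · rw [abs_of_nonneg (by linarith), dist_comm]
    linarith [L_lip h x hL hd hd₁ hst]

lemma L_equiv (hL : IsInvariantAxis h x γ L) {d₁ : ℝ} (hd : d₁ = dist x (h x))
    (hd₁ : 0 < d₁) (t : ℝ) : L (t + d₁) = h (L t) := by
  set k := ⌊t / d₁⌋ with hk
  have htmem := floor_mem_block hd₁ t
  have htmem' : t + d₁ ∈ Set.Icc (((k + 1 : ℤ):ℝ) * d₁) ((((k + 1 : ℤ):ℝ) + 1) * d₁) := by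
    push_cast
    constructor
    · have := htmem.1; nlinarith
    · have := htmem.2; nlinarith
  have hL2 : ∀ j : ℤ, ∀ u ∈ Set.Icc ((j:ℝ) * d₁) (((j:ℝ) + 1) * d₁),
      L u = (h ^ j) (γ (u - (j:ℝ) * d₁)) := by rw [hd]; exact hL.2
  have e1 : L (t + d₁) = (h ^ (k + 1)) (γ (t + d₁ - ((k + 1 : ℤ):ℝ) * d₁)) := by
    have := hL2 (k + 1) (t + d₁) (by push_cast at htmem' ⊢; exact htmem')
    push_cast at this ⊢; exact this
  have e2 : L t = (h ^ k) (γ (t - (k:ℝ) * d₁)) := hL2 k t htmem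
  rw [e1, e2]
  have harg : t + d₁ - ((k + 1 : ℤ):ℝ) * d₁ = t - (k:ℝ) * d₁ := by push_cast; ring
  rw [harg, show k + 1 = 1 + k from by ring, iso_zpow_apply, zpow_one]

lemma L_equivN (hL : IsInvariantAxis h x γ L) {d₁ : ℝ} (hd : d₁ = dist x (h x))
    (hd₁ : 0 < d₁) (n : ℕ) (t : ℝ) : L (t + n * d₁) = (⇑h)^[n] (L t) := by
  induction n with
  | zero => simp
  | succ n ih =>
    have : t + ((n:ℝ) + 1) * d₁ = (t + n * d₁) + d₁ := by ring
    push_cast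
    rw [this, L_equiv h x hL hd hd₁, ih]
    exact (Function.iterate_succ_apply' (⇑h) n (L t)).symm

lemma L_lower (hL : IsInvariantAxis h x γ L) {d₁ : ℝ} (hd : d₁ = dist x (h x))
    (hd₁ : 0 < d₁) {s t : ℝ} (hst : s ≤ t) :
    avgDisp h x / d₁ * (t - s) - (avgDisp h x + 2 * d₁) ≤ dist (L s) (L t) := by
  set α := avgDisp h x with hα
  set k₁ := ⌊s / d₁⌋ with hk₁
  set k₂ := ⌊t / d₁⌋ with hk₂
  have hmono : k₁ ≤ k₂ := Int.floor_le_floor (by gcongr)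
  have hsmem := floor_mem_block hd₁ s
  have htmem := floor_mem_block hd₁ t
  have hγmem1 : s - (k₁:ℝ) * d₁ ∈ Set.Icc (0:ℝ) (dist x (h x)) := by
    rw [← hd]; constructor <;> [linarith [hsmem.1]; linarith [hsmem.2]]
  have hγmem2 : t - (k₂:ℝ) * d₁ ∈ Set.Icc (0:ℝ) (dist x (h x)) := by
    rw [← hd]; constructor <;> [linarith [htmem.1]; linarith [htmem.2]]
  have e1 : dist (L s) ((h ^ k₁) x) ≤ d₁ := by
    rw [L_block h x hL hd hd₁ s, ← hk₁, iso_zpow_dist, dist_comm]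
    rw [geod_dist_left hL.1 hγmem1]
    linarith [hsmem.2]
  have e2 : dist (L t) ((h ^ k₂) x) ≤ d₁ := by
    rw [L_block h x hL hd hd₁ t, ← hk₂, iso_zpow_dist, dist_comm]
    rw [geod_dist_left hL.1 hγmem2]
    linarith [htmem.2]
  set N := (k₂ - k₁).toNat with hN
  have e3 : dist ((h ^ k₁) x) ((h ^ k₂) x) = dist x ((⇑h)^[N] x) := by
    have hsplit : (h ^ k₂) x = (h ^ k₁) ((h ^ (k₂ - k₁)) x) := by
      rw [← iso_zpow_apply]; congr 1; ring
    rw [hsplit, iso_zpow_dist]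
    congr 1
    rw [show k₂ - k₁ = (N : ℤ) from by omega, iso_zpow_natCast_apply]
  have e4 : (N : ℝ) * α ≤ dist x ((⇑h)^[N] x) := nsmul_avgDisp_le h x N
  have e5 : (t - s) / d₁ - 1 ≤ (N : ℝ) := by
    have h1 : (k₂ - k₁ : ℤ) ≤ (N : ℤ) := by omega
    have h1' : ((k₂:ℝ) - k₁) ≤ (N : ℝ) := by exact_mod_cast h1
    have h2 : t / d₁ < (k₂:ℝ) + 1 := Int.lt_floor_add_one (t / d₁)
    have h3 : (k₁:ℝ) ≤ s / d₁ := Int.floor_le (s / d₁)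
    have h4 : (t - s) / d₁ = t / d₁ - s / d₁ := by ring
    linarith
  have e6 : 0 ≤ α := avgDisp_nonneg h x
  have e7 : ((t - s) / d₁ - 1) * α ≤ (N:ℝ) * α := mul_le_mul_of_nonneg_right e5 e6
  have e8 : dist ((h ^ k₁) x) ((h ^ k₂) x) ≤
      dist ((h ^ k₁) x) (L s) + dist (L s) (L t) + dist (L t) ((h ^ k₂) x) := by
    linarith [dist_triangle ((h ^ k₁) x) (L s) ((h ^ k₂) x),
      dist_triangle (L s) (L t) ((h ^ k₂) x)]
  have hcomm1 : dist ((h ^ k₁) x) (L s) = dist (L s) ((h ^ k₁) x) := dist_comm _ _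
  have hfield : ((t - s) / d₁ - 1) * α = α / d₁ * (t - s) - α := by
    field_simp
  linarith

end axisfacts

section morse
variable {X : Type*} [MetricSpace X] {δ : ℝ}

set_option maxHeartbeats 1000000 in
lemma morse2 (hδ : 0 ≤ δ) (hgeo : GeodesicSpace X) (hhyp : DeltaHyperbolic X δ)
    (h : X ≃ᵢ X) (x : X) {γ L : ℝ → X} (hL : IsInvariantAxis h x γ L)
    {d₁ : ℝ} (hd : d₁ = dist x (h x)) (hd₁ : 0 < d₁) (hα : 0 < avgDisp h x) :
    ∃ R₂ : ℝ, 0 ≤ R₂ ∧ ∀ s t : ℝ, s ≤ t → ∀ c : ℝ → X,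
      IsGeodesicSegment c (L s) (L t) →
      ∀ u ∈ Set.Icc s t, infDist (L u) (GImg c (L s) (L t)) ≤ R₂ := by
  set α := avgDisp h x with hαdef
  set C₆ : ℝ := 10 * δ + 4 with hC₆
  set Θ : ℝ := 2 * (C₆ + 1) * d₁ / α with hΘ
  have hC₆pos : 0 < C₆ := by rw [hC₆]; linarith
  have hΘpos : 0 < Θ := by rw [hΘ]; positivity
  set r : ℝ := Θ + 3 * δ + 1 with hr
  have hrpos : 0 < r := by rw [hr]; linarith
  set β : ℝ := α / (2 * d₁) with hβ
  have hβpos : 0 < β := by rw [hβ]; positivity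
  set T : ℝ := (2 * d₁ / α) * (2 * r + 3 + C₆ + α + 2 * d₁) with hT
  have hTpos : 0 < T := by
    rw [hT]
    have : (0:ℝ) < 2 * r + 3 + C₆ + α + 2 * d₁ := by linarith
    positivity
  refine ⟨r + T, by linarith, ?_⟩
  intro s t hst c hc u huIcc
  set Cimg := GImg c (L s) (L t) with hCimg
  have hCne : Cimg.Nonempty := GImg_nonempty hc
  set F : ℝ → ℝ := fun w => infDist (L w) Cimg with hF
  have hFs : F s = 0 := infDist_zero_of_mem (mem_GImg_left hc)
  have hFt : F t = 0 := infDist_zero_of_mem (mem_GImg_right hc)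
  have hFnonneg : ∀ w, 0 ≤ F w := fun w => infDist_nonneg
  have hFlip : ∀ a b : ℝ, a ≤ b → F b ≤ F a + (b - a) := by
    intro a b hab
    calc F b ≤ F a + dist (L b) (L a) := infDist_le_infDist_add_dist
      _ ≤ F a + (b - a) := by
          rw [dist_comm]
          linarith [L_lip h x hL hd hd₁ hab]
  have hFlip' : ∀ a b : ℝ, a ≤ b → F a ≤ F b + (b - a) := by
    intro a b hab
    calc F a ≤ F b + dist (L a) (L b) := infDist_le_infDist_add_dist
      _ ≤ F b + (b - a) := by linarith [L_lip h x hL hd hd₁ hab]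
  have hFcont : Continuous F := by
    apply LipschitzWith.continuous (K := 1)
    apply LipschitzWith.of_dist_le_mul
    intro a b
    simp only [NNReal.coe_one, one_mul, Real.dist_eq]
    rw [abs_le]
    rcases le_total a b with hab | hab
    · constructor
      · have := hFlip a b hab; rw [abs_of_nonpos (by linarith)]; linarith
      · have := hFlip' a b hab; rw [abs_of_nonpos (by linarith)]; linarith
    · constructor
      · have := hFlip' b a hab; rw [abs_of_nonneg (by linarith)]; linarith
      · have := hFlip b a hab; rw [abs_of_nonneg (by linarith)]; linarith
  by_cases hur : F u ≤ r
  · linarith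
  push_neg at hur
  have hsu : s ≤ u := huIcc.1
  have hut : u ≤ t := huIcc.2
  -- u₁
  set S₁ := {w : ℝ | w ∈ Set.Icc s u ∧ F w ≤ r} with hS₁
  have hS₁ne : S₁.Nonempty := ⟨s, ⟨le_refl _, hsu⟩, by rw [hFs]; linarith⟩
  have hS₁bdd : BddAbove S₁ := ⟨u, fun w hw => hw.1.2⟩
  have hS₁closed : IsClosed S₁ := by
    have hSeq : S₁ = Set.Icc s u ∩ F ⁻¹' Set.Iic r := rfl
    rw [hSeq]
    exact isClosed_Icc.inter (IsClosed.preimage hFcont isClosed_Iic)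
  set u₁ := sSup S₁ with hu₁
  have hu₁mem : u₁ ∈ S₁ := hS₁closed.csSup_mem hS₁ne hS₁bdd
  have hu₁le : u₁ ≤ u := hu₁mem.1.2
  have hsu₁ : s ≤ u₁ := hu₁mem.1.1
  have hFu₁le : F u₁ ≤ r := hu₁mem.2
  have hu₁lt : u₁ < u := lt_of_le_of_ne hu₁le (fun he => by rw [he] at hFu₁le; linarith)
  have hAbove : ∀ w, u₁ < w → w ≤ u → r < F w := by
    intro w hw1 hw2
    by_contra hcon
    push_neg at hcon
    have : w ∈ S₁ := ⟨⟨by linarith, hw2⟩, hcon⟩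
    have := le_csSup hS₁bdd this
    linarith
  have hFu₁ge : r ≤ F u₁ := by
    by_contra hcon
    push_neg at hcon
    set η := min ((r - F u₁) / 2) (u - u₁) with hη
    have hηpos : 0 < η := lt_min (by linarith) (by linarith)
    have h1 : F (u₁ + η) ≤ F u₁ + η := by
      have := hFlip u₁ (u₁ + η) (by linarith)
      linarith
    have hη2 : η ≤ u - u₁ := min_le_right _ _
    have h2 : r < F (u₁ + η) := hAbove (u₁ + η) (by linarith) (by linarith)
    have h3 : η ≤ (r - F u₁) / 2 := min_le_left _ _
    linarith
  -- u₂
  set S₂ := {w : ℝ | w ∈ Set.Icc u t ∧ F w ≤ r} with hS₂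
  have hS₂ne : S₂.Nonempty := ⟨t, ⟨hut, le_refl _⟩, by rw [hFt]; linarith⟩
  have hS₂bdd : BddBelow S₂ := ⟨u, fun w hw => hw.1.1⟩
  have hS₂closed : IsClosed S₂ := by
    have hSeq : S₂ = Set.Icc u t ∩ F ⁻¹' Set.Iic r := rfl
    rw [hSeq]
    exact isClosed_Icc.inter (IsClosed.preimage hFcont isClosed_Iic)
  set u₂ := sInf S₂ with hu₂
  have hu₂mem : u₂ ∈ S₂ := hS₂closed.csInf_mem hS₂ne hS₂bdd
  have hu₂ge : u ≤ u₂ := hu₂mem.1.1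
  have hu₂t : u₂ ≤ t := hu₂mem.1.2
  have hFu₂le : F u₂ ≤ r := hu₂mem.2
  have hu₂gt : u < u₂ := lt_of_le_of_ne hu₂ge (fun he => by rw [← he] at hFu₂le; linarith)
  have hBelow : ∀ w, u ≤ w → w < u₂ → r < F w := by
    intro w hw1 hw2
    by_contra hcon
    push_neg at hcon
    have : w ∈ S₂ := ⟨⟨hw1, by linarith⟩, hcon⟩
    have := csInf_le hS₂bdd this
    linarith
  have hu₁₂ : u₁ ≤ u₂ := by linarith
  have hMid : ∀ w, u₁ ≤ w → w ≤ u₂ → r ≤ F w := by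
    intro w hw1 hw2
    rcases le_total w u with hwu | hwu
    · rcases eq_or_lt_of_le hw1 with he | hlt
      · rw [← he]; exact hFu₁ge
      · exact (hAbove w hlt hwu).le
    · rcases eq_or_lt_of_le hw2 with he | hlt
      · rw [he]
        by_contra hcon
        push_neg at hcon
        set η := min ((r - F u₂) / 2) (u₂ - u) with hη
        have hηpos : 0 < η := lt_min (by linarith) (by linarith)
        have h1 : F (u₂ - η) ≤ F u₂ + η := by
          have := hFlip' (u₂ - η) u₂ (by linarith)
          linarith
        have hη2 : η ≤ u₂ - u := min_le_right _ _
        have h2 : r < F (u₂ - η) := hBelow (u₂ - η) (by linarith) (by linarith)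
        have h3 : η ≤ (r - F u₂) / 2 := min_le_left _ _
        linarith
      · exact (hBelow w hwu hlt).le
  -- chain
  set Δ := u₂ - u₁ with hΔ
  have hΔpos : 0 < Δ := by rw [hΔ]; linarith
  set N := ⌈Δ / Θ⌉₊ with hN
  have hNp : Δ ≤ N * Θ := by
    have h1 : Δ / Θ ≤ (N : ℝ) := Nat.le_ceil _
    rw [div_le_iff₀ hΘpos] at h1
    linarith
  set v : ℕ → ℝ := fun i => min (u₁ + i * Θ) u₂ with hv
  have hvdef : ∀ i : ℕ, v i = min (u₁ + i * Θ) u₂ := fun i => rfl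
  have hv0 : v 0 = u₁ := by
    rw [hvdef 0]
    push_cast
    rw [zero_mul, add_zero]
    exact min_eq_left hu₁₂
  have hvN : v N = u₂ := by
    rw [hvdef N]
    apply min_eq_right
    rw [hΔ] at hNp
    linarith
  have hvmem : ∀ i, v i ∈ Set.Icc u₁ u₂ := by
    intro i
    rw [hvdef i]
    constructor
    · apply le_min
      · have : (0:ℝ) ≤ i * Θ := by positivity
        linarith
      · linarith
    · exact min_le_right _ _
  have hvmono : ∀ i, v i ≤ v (i + 1) := by
    intro i
    rw [hvdef i, hvdef (i + 1)]
    apply min_le_min _ (le_refl _)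
    apply add_le_add (le_refl _)
    apply mul_le_mul_of_nonneg_right _ hΘpos.le
    push_cast
    linarith
  have hvstep : ∀ i, v (i + 1) - v i ≤ Θ := by
    intro i
    rw [hvdef i, hvdef (i + 1)]
    rcases le_total (u₁ + i * Θ) u₂ with hcase | hcase
    · have h1 : min (u₁ + (i:ℝ) * Θ) u₂ = u₁ + i * Θ := min_eq_left hcase
      have h2 : min (u₁ + ((i + 1 : ℕ):ℝ) * Θ) u₂ ≤ u₁ + ((i + 1 : ℕ):ℝ) * Θ :=
        min_le_left _ _
      push_cast at h2 ⊢
      rw [h1]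
      linarith
    · have h1 : min (u₁ + (i:ℝ) * Θ) u₂ = u₂ := min_eq_right hcase
      have h2 : min (u₁ + ((i + 1 : ℕ):ℝ) * Θ) u₂ ≤ u₂ := min_le_right _ _
      push_cast at h2 ⊢
      rw [h1]
      linarith
  -- projections
  have hex : ∀ i : ℕ, ∃ q ∈ Cimg, dist (L (v i)) q < F (v i) + 1 := by
    intro i
    apply (infDist_lt_iff hCne).mp
    have he : F (v i) = infDist (L (v i)) Cimg := rfl
    linarith [he.ge, he.le]
  choose p hpmem hpd using hex
  have hstep : ∀ i : ℕ, dist (p i) (p (i + 1)) ≤ C₆ := by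
    intro i
    rw [hC₆]
    apply contraction hδ hgeo hhyp hc (hpmem i) (hpmem (i + 1)) (hpd i).le (hpd (i + 1)).le
    have hd1 : dist (L (v i)) (L (v (i + 1))) ≤ Θ := by
      have := L_lip h x hL hd hd₁ (hvmono i)
      linarith [hvstep i]
    have hd2 : r ≤ F (v i) := hMid (v i) (hvmem i).1 (hvmem i).2
    have hle : dist (L (v i)) (L (v (i + 1))) + 3 * δ + 1 ≤ r := by rw [hr]; linarith
    exact le_trans hle hd2
  have hacc : ∀ i : ℕ, dist (p 0) (p i) ≤ i * C₆ := by
    intro i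
    induction i with
    | zero => simp only [dist_self, Nat.cast_zero, zero_mul, le_refl]
    | succ i ih =>
      calc dist (p 0) (p (i + 1)) ≤ dist (p 0) (p i) + dist (p i) (p (i + 1)) :=
            dist_triangle _ _ _
        _ ≤ i * C₆ + C₆ := by linarith [hstep i]
        _ = ((i + 1 : ℕ) : ℝ) * C₆ := by push_cast; ring
  -- combine
  have hNbound : (N : ℝ) ≤ Δ / Θ + 1 := by
    rw [hN]
    have := Nat.ceil_lt_add_one (show (0:ℝ) ≤ Δ / Θ by positivity)
    linarith
  have hdist12 : dist (L u₁) (L u₂) ≤ 2 * r + 2 + N * C₆ := by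
    have h2 : dist (L u₁) (p 0) ≤ r + 1 := by
      have h2a := hpd 0
      rw [hv0] at h2a
      have h2b : F u₁ ≤ r := hFu₁le
      linarith
    have h3 : dist (p N) (L u₂) ≤ r + 1 := by
      have h3a := hpd N
      rw [hvN] at h3a
      rw [dist_comm]
      linarith
    calc dist (L u₁) (L u₂) ≤ dist (L u₁) (p 0) + dist (p 0) (L u₂) := dist_triangle _ _ _
      _ ≤ dist (L u₁) (p 0) + (dist (p 0) (p N) + dist (p N) (L u₂)) := by
          linarith [dist_triangle (p 0) (p N) (L u₂)]
      _ ≤ 2 * r + 2 + N * C₆ := by linarith [hacc N]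
  have hlow : α / d₁ * Δ - (α + 2 * d₁) ≤ dist (L u₁) (L u₂) :=
    L_lower h x hL hd hd₁ hu₁₂
  have hβΘ : β * Θ = C₆ + 1 := by
    rw [hβ, hΘ]
    field_simp
  have hNC : (N : ℝ) * C₆ ≤ β * Δ + (C₆ + 1) := by
    have h1 : (N:ℝ) * C₆ ≤ (Δ / Θ + 1) * C₆ := mul_le_mul_of_nonneg_right hNbound hC₆pos.le
    have h2 : (Δ / Θ) * C₆ ≤ (Δ / Θ) * (C₆ + 1) := by
      apply mul_le_mul_of_nonneg_left (by linarith)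
      positivity
    have h3 : (Δ / Θ) * (C₆ + 1) = β * Δ := by
      rw [← hβΘ]
      field_simp
    nlinarith
  have h2β : α / d₁ = 2 * β := by rw [hβ]; field_simp
  have hβΔ : β * Δ ≤ 2 * r + 3 + C₆ + α + 2 * d₁ := by
    rw [h2β] at hlow
    linarith
  have hβT : β * T = 2 * r + 3 + C₆ + α + 2 * d₁ := by
    rw [hβ, hT]
    field_simp
  have hΔT : Δ ≤ T := by
    rw [← hβT] at hβΔ
    exact le_of_mul_le_mul_left hβΔ hβpos
  have hfinal : F u ≤ F u₁ + (u - u₁) := hFlip u₁ u hu₁le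
  have : F u = infDist (L u) Cimg := rfl
  rw [← this]
  have : u - u₁ ≤ Δ := by rw [hΔ]; linarith
  linarith
end morse

section axisqc
variable {X : Type*} [MetricSpace X] {δ : ℝ}

set_option maxHeartbeats 1000000 in
lemma axis_qc (hδ : 0 ≤ δ) (hgeo : GeodesicSpace X) (hhyp : DeltaHyperbolic X δ)
    (h : X ≃ᵢ X) (x : X) {γ L : ℝ → X} (hL : IsInvariantAxis h x γ L)
    {d₁ : ℝ} (hd : d₁ = dist x (h x)) (hd₁ : 0 < d₁) (hα : 0 < avgDisp h x) :
    ∃ R : ℝ, 0 ≤ R ∧ ∀ s t : ℝ, ∀ g : ℝ → X, IsGeodesicSegment g (L s) (L t) →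
      ∀ w ∈ GImg g (L s) (L t), infDist w (Set.range L) ≤ R := by
  obtain ⟨R₂, hR₂0, hR₂⟩ := morse2 hδ hgeo hhyp h x hL hd hd₁ hα
  set D : ℝ := 2 * R₂ + 3 with hD
  refine ⟨3 * R₂ + 4, by linarith, ?_⟩
  -- first the ordered case
  have Hord : ∀ s t : ℝ, s ≤ t → ∀ g : ℝ → X, IsGeodesicSegment g (L s) (L t) →
      ∀ w ∈ GImg g (L s) (L t), infDist w (Set.range L) ≤ 3 * R₂ + 4 := by
    intro s t hst g hg w hw
    set ℓ := dist (L s) (L t) with hℓ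
    obtain ⟨σ, hσmem, rfl⟩ := hw
    set M := ⌈t - s⌉₊ with hM
    set u : ℕ → ℝ := fun k => min (s + k) t with hu
    have hudef : ∀ k : ℕ, u k = min (s + k) t := fun k => rfl
    have hu0 : u 0 = s := by
      rw [hudef 0]; push_cast; rw [add_zero]; exact min_eq_left hst
    have huM : u M = t := by
      rw [hudef M]
      apply min_eq_right
      have := Nat.le_ceil (t - s)
      linarith
    have humem : ∀ k, u k ∈ Set.Icc s t := by
      intro k
      rw [hudef k]
      constructor
      · apply le_min _ hst
        have : (0:ℝ) ≤ (k:ℝ) := by positivity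
        linarith
      · exact min_le_right _ _
    have humono : ∀ k, u k ≤ u (k + 1) := by
      intro k
      rw [hudef k, hudef (k + 1)]
      apply min_le_min _ (le_refl _)
      push_cast
      linarith
    have hustep : ∀ k, u (k + 1) - u k ≤ 1 := by
      intro k
      rw [hudef k, hudef (k + 1)]
      rcases le_total (s + k) t with hcase | hcase
      · have h1 : min (s + (k:ℝ)) t = s + k := min_eq_left hcase
        have h2 : min (s + ((k + 1 : ℕ):ℝ)) t ≤ s + ((k + 1 : ℕ):ℝ) := min_le_left _ _
        push_cast at h2 ⊢
        rw [h1]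
        linarith
      · have h1 : min (s + (k:ℝ)) t = t := min_eq_right hcase
        have h2 : min (s + ((k + 1 : ℕ):ℝ)) t ≤ t := min_le_right _ _
        push_cast at h2 ⊢
        rw [h1]
        linarith
    -- feet
    have hex : ∀ k : ℕ, ∃ τ ∈ Set.Icc (0:ℝ) ℓ, dist (L (u k)) (g τ) < R₂ + 1 := by
      intro k
      have h1 : infDist (L (u k)) (GImg g (L s) (L t)) ≤ R₂ := hR₂ s t hst g hg (u k) (humem k)
      have h2 := (infDist_lt_iff (GImg_nonempty hg)).mp (by linarith : infDist (L (u k)) (GImg g (L s) (L t)) < R₂ + 1)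
      obtain ⟨q, ⟨τ, hτ, rfl⟩, hq⟩ := h2
      exact ⟨τ, hτ, hq⟩
    choose β hβmem hβd using hex
    have hβ0 : β 0 ≤ R₂ + 1 := by
      have h1 : dist (g (β 0)) (g 0) = |β 0 - 0| := hg.2.2 _ (hβmem 0) 0 ⟨le_refl _, dist_nonneg⟩
      have h2 : g 0 = L s := hg.1
      have h3 := hβd 0
      rw [hu0] at h3
      rw [h2] at h1
      have h4 : |β 0 - 0| ≤ R₂ + 1 := by
        rw [← h1, dist_comm]
        linarith
      rw [sub_zero, abs_of_nonneg (hβmem 0).1] at h4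
      exact h4
    have hβM : ℓ - (R₂ + 1) ≤ β M := by
      have h1 : dist (g (β M)) (g ℓ) = |β M - ℓ| := hg.2.2 _ (hβmem M) ℓ ⟨dist_nonneg, le_refl _⟩
      have h2 : g ℓ = L t := hg.2.1
      have h3 := hβd M
      rw [huM] at h3
      rw [h2] at h1
      have h4 : |β M - ℓ| ≤ R₂ + 1 := by
        rw [← h1, dist_comm]
        linarith
      rw [abs_le] at h4
      linarith [h4.1]
    have hβstep : ∀ k, |β (k + 1) - β k| ≤ D := by
      intro k
      have h1 : dist (g (β (k+1))) (g (β k)) = |β (k+1) - β k| :=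
        hg.2.2 _ (hβmem (k+1)) _ (hβmem k)
      rw [← h1]
      have h2 : dist (L (u k)) (L (u (k+1))) ≤ 1 := by
        have := L_lip h x hL hd hd₁ (humono k)
        linarith [hustep k]
      calc dist (g (β (k+1))) (g (β k)) ≤
            dist (g (β (k+1))) (L (u (k+1))) + dist (L (u (k+1))) (g (β k)) :=
              dist_triangle _ _ _
        _ ≤ dist (g (β (k+1))) (L (u (k+1))) +
              (dist (L (u (k+1))) (L (u k)) + dist (L (u k)) (g (β k))) := by
            linarith [dist_triangle (L (u (k+1))) (L (u k)) (g (β k))]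
        _ ≤ D := by
            rw [hD]
            have e1 := hβd (k+1)
            have e2 := hβd k
            rw [dist_comm (g (β (k+1))) (L (u (k+1)))]
            rw [dist_comm (L (u (k+1))) (L (u k))]
            linarith
    -- discrete IVT
    have hivt : ∃ k : ℕ, |β k - σ| ≤ D := by
      by_contra hcon
      push_neg at hcon
      have hall : ∀ k : ℕ, β k < σ := by
        intro k
        induction k with
        | zero =>
          rcases lt_or_ge (β 0) σ with hlt | hge
          · exact hlt
          · exfalso
            have := hcon 0
            rw [abs_of_nonneg (by linarith)] at this
            have hσ0 : 0 ≤ σ := hσmem.1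
            rw [hD] at this
            linarith
        | succ k ih =>
          rcases lt_or_ge (β (k+1)) σ with hlt | hge
          · exact hlt
          · exfalso
            have h1 := hβstep k
            rw [abs_le] at h1
            have := hcon (k+1)
            rw [abs_of_nonneg (by linarith)] at this
            linarith [h1.2]
      have h1 := hall M
      have h2 := hcon M
      rw [abs_of_nonpos (by linarith)] at h2
      have hσℓ : σ ≤ ℓ := hσmem.2
      rw [hD] at h2
      linarith
    obtain ⟨k, hk⟩ := hivt
    have h1 : dist (g σ) (g (β k)) = |σ - β k| := hg.2.2 _ hσmem _ (hβmem k)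
    have h2 : dist (g σ) (L (u k)) ≤ 3 * R₂ + 4 := by
      calc dist (g σ) (L (u k)) ≤ dist (g σ) (g (β k)) + dist (g (β k)) (L (u k)) :=
            dist_triangle _ _ _
        _ ≤ |σ - β k| + (R₂ + 1) := by
            rw [h1]
            have := hβd k
            rw [dist_comm (g (β k)) (L (u k))]
            linarith
        _ ≤ 3 * R₂ + 4 := by
            rw [abs_sub_comm]
            rw [hD] at hk
            linarith
    exact le_trans (infDist_le_dist_of_mem ⟨u k, rfl⟩) h2
  -- general case by reversal
  intro s t g hg w hw
  rcases le_total s t with hst | hst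
  · exact Hord s t hst g hg w hw
  · obtain ⟨hg', himg⟩ := geod_reverse hg
    apply Hord t s hst _ hg'
    rw [himg]
    exact hw
end axisqc

section projlower
variable {X : Type*} [MetricSpace X] {δ : ℝ}

lemma proj_lower (hδ : 0 ≤ δ) (hgeo : GeodesicSpace X) (hhyp : DeltaHyperbolic X δ)
    (h : X ≃ᵢ X) (x : X) {γ L : ℝ → X} (hL : IsInvariantAxis h x γ L)
    {d₁ : ℝ} (hd : d₁ = dist x (h x)) (hd₁ : 0 < d₁) (hα : 0 < avgDisp h x)
    {ε : ℝ} (hε : 0 ≤ ε) :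
    ∃ C₂ : ℝ, 0 ≤ C₂ ∧ ∀ a b p q : X, p ∈ quasiProj (Set.range L) ε a →
      q ∈ quasiProj (Set.range L) ε b → dist p q - C₂ ≤ dist a b := by
  obtain ⟨R, hR0, hR⟩ := axis_qc hδ hgeo hhyp h x hL hd hd₁ hα
  refine ⟨4 * δ + 2 * (ε + R) + 2 + ε, by linarith, ?_⟩
  intro a b p q hp hq
  obtain ⟨sp, hsp⟩ := hp.1
  obtain ⟨sq, hsq⟩ := hq.1
  obtain ⟨g, hg⟩ := hgeo p q
  have hgeod : IsGeodesicSegment g (L sp) (L sq) := by rw [hsp, hsq]; exact hg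
  have hRg : ∀ w ∈ GImg g p q, infDist w (Set.range L) ≤ R := by
    have := hR sp sq g hgeod
    rw [hsp, hsq] at this
    exact this
  have hεR : (0:ℝ) ≤ ε + R := by linarith
  have hne := GImg_nonempty hg
  have claim1 : dist a p ≤ infDist a (GImg g p q) + (ε + R) := by
    have hbound : ∀ w ∈ GImg g p q, dist a p - (ε + R) ≤ dist a w := by
      intro w hw
      have h1 : infDist a (Set.range L) ≤ infDist w (Set.range L) + dist a w :=
        infDist_le_infDist_add_dist
      have h2 := hRg w hw
      linarith [hp.2]
    linarith [le_infDist' hne hbound]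
  have claim2 : dist b q ≤ infDist b (GImg g p q) + (ε + R) := by
    have hbound : ∀ w ∈ GImg g p q, dist b q - (ε + R) ≤ dist b w := by
      intro w hw
      have h1 : infDist b (Set.range L) ≤ infDist w (Set.range L) + dist b w :=
        infDist_le_infDist_add_dist
      have h2 := hRg w hw
      linarith [hq.2]
    linarith [le_infDist' hne hbound]
  have P1a := proj_ineq hδ hgeo hhyp hg (mem_GImg_left hg) (mem_GImg_right hg) hεR claim1
  have P1b := proj_ineq hδ hgeo hhyp hg (mem_GImg_right hg) (mem_GImg_left hg) hεR claim2
  have tri1 : dist a q ≤ dist a b + dist b q := dist_triangle a b q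
  have tri2 : dist b p ≤ dist a b + dist a p := by
    calc dist b p ≤ dist b a + dist a p := dist_triangle _ _ _
      _ = dist a b + dist a p := by rw [dist_comm b a]
  have low_ap : infDist a (Set.range L) ≤ dist a p := infDist_le_dist_of_mem hp.1
  have low_bq : infDist b (Set.range L) ≤ dist b q := infDist_le_dist_of_mem hq.1
  have hcomm : dist q p = dist p q := dist_comm q p
  linarith [hp.2, hq.2]

lemma disp_upper (hδ : 0 ≤ δ) (hgeo : GeodesicSpace X) (hhyp : DeltaHyperbolic X δ)
    (h : X ≃ᵢ X) (x : X) {γ L : ℝ → X} (hL : IsInvariantAxis h x γ L)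
    {d₁ : ℝ} (hd : d₁ = dist x (h x)) (hd₁ : 0 < d₁) (hα : 0 < avgDisp h x) :
    ∃ C₀ : ℝ, 0 ≤ C₀ ∧ ∀ n : ℕ, dist x ((⇑h)^[n] x) ≤ n * avgDisp h x + C₀ := by
  obtain ⟨R₂, hR₂0, hR₂⟩ := morse2 hδ hgeo hhyp h x hL hd hd₁ hα
  set C₀ : ℝ := 2 * R₂ + 2 with hC₀
  refine ⟨C₀, by linarith, ?_⟩
  set a : ℕ → ℝ := fun n => dist x ((⇑h)^[n] x) with ha
  have ha0 : a 0 = 0 := by rw [ha]; simp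
  have e0 : L 0 = x := L_zero h x hL hd hd₁
  have eN : ∀ n : ℕ, L ((n:ℝ) * d₁) = (⇑h)^[n] x := by
    intro n
    have := L_equivN h x hL hd hd₁ n 0
    rw [zero_add] at this
    rw [this, e0]
  have superadd : ∀ n m : ℕ, a n + a m ≤ a (n + m) + C₀ := by
    intro n m
    obtain ⟨c, hc⟩ := hgeo (L 0) (L (((n + m : ℕ):ℝ) * d₁))
    have hst : (0:ℝ) ≤ ((n + m : ℕ):ℝ) * d₁ := by positivity
    have humem : (n:ℝ) * d₁ ∈ Set.Icc (0:ℝ) (((n + m : ℕ):ℝ) * d₁) := by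
      constructor
      · positivity
      · push_cast
        have : (n:ℝ) ≤ (n:ℝ) + m := le_add_of_nonneg_right (by positivity)
        nlinarith [hd₁.le]
    have h1 : infDist (L ((n:ℝ) * d₁)) (GImg c (L 0) (L (((n + m:ℕ):ℝ) * d₁))) ≤ R₂ :=
      hR₂ 0 _ hst c hc _ humem
    obtain ⟨q, hqmem, hqd⟩ := (infDist_lt_iff (GImg_nonempty hc)).mp
      (by linarith : infDist (L ((n:ℝ) * d₁)) (GImg c (L 0) (L (((n + m:ℕ):ℝ) * d₁))) < R₂ + 1)
    have hsum : dist (L 0) q + dist q (L (((n + m:ℕ):ℝ) * d₁)) =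
        dist (L 0) (L (((n + m:ℕ):ℝ) * d₁)) := geod_sum hc hqmem
    rw [e0, eN (n + m)] at hsum
    have hqn : dist q ((⇑h)^[n] x) ≤ R₂ + 1 := by
      rw [dist_comm, ← eN n]
      linarith
    have hm : dist ((⇑h)^[n] x) ((⇑h)^[n + m] x) = a m := by
      rw [ha]
      have : (⇑h)^[n + m] x = (⇑h)^[n] ((⇑h)^[m] x) := by
        rw [Function.iterate_add_apply]
      rw [this, iso_iterate_dist]
    have hn : a n ≤ dist x q + (R₂ + 1) := by
      rw [ha]
      calc dist x ((⇑h)^[n] x) ≤ dist x q + dist q ((⇑h)^[n] x) := dist_triangle _ _ _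
        _ ≤ dist x q + (R₂ + 1) := by linarith
    have hmm : a m ≤ (R₂ + 1) + dist q ((⇑h)^[n + m] x) := by
      rw [← hm]
      calc dist ((⇑h)^[n] x) ((⇑h)^[n + m] x) ≤
            dist ((⇑h)^[n] x) q + dist q ((⇑h)^[n + m] x) := dist_triangle _ _ _
        _ ≤ (R₂ + 1) + dist q ((⇑h)^[n + m] x) := by
            rw [dist_comm ((⇑h)^[n] x) q]
            linarith
    have hfin : a (n + m) = dist x q + dist q ((⇑h)^[n + m] x) := hsum.symm
    rw [hC₀]
    linarith
  have hsub : ∀ j n : ℕ, a (j * n) ≤ (j:ℝ) * a n := by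
    intro j n
    induction j with
    | zero => simp [ha]
    | succ j ih =>
      have h1 : (j + 1) * n = j * n + n := by ring
      rw [h1]
      have h2 : a (j * n + n) ≤ a (j * n) + a n := dist_iterate_subadd h x (j * n) n
      push_cast
      nlinarith [h2, ih]
  have hsup : ∀ j n : ℕ, (j:ℝ) * (a n - C₀) ≤ a (j * n) := by
    intro j n
    induction j with
    | zero => simp [ha]
    | succ j ih =>
      have h1 : (j + 1) * n = j * n + n := by ring
      rw [h1]
      have h2 : a (j * n) + a n ≤ a (j * n + n) + C₀ := superadd (j * n) n
      push_cast
      nlinarith [ih]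
  intro N
  rcases Nat.eq_zero_or_pos N with rfl | hN
  · simp only [Function.iterate_zero, id_eq, dist_self, Nat.cast_zero, zero_mul, zero_add]
    linarith
  · have hNr : (0:ℝ) < N := by exact_mod_cast hN
    have claim : (a N - C₀) / N ≤ avgDisp h x := by
      apply le_ciInf
      intro m
      have hmr : (0:ℝ) < ((m:ℕ):ℝ) := by exact_mod_cast m.pos
      rw [div_le_div_iff₀ hNr hmr]
      have k1 : ((m:ℕ):ℝ) * (a N - C₀) ≤ a ((m:ℕ) * N) := hsup m N
      have k2 : a ((m:ℕ) * N) ≤ (N:ℝ) * a (m:ℕ) := by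
        rw [Nat.mul_comm]
        exact hsub N m
      have : a (m:ℕ) = dist x ((⇑h)^[(m:ℕ)] x) := rfl
      rw [← this]
      nlinarith [k1, k2]
    rw [div_le_iff₀ hNr] at claim
    have : a N = dist x ((⇑h)^[N] x) := rfl
    rw [← this]
    nlinarith [claim]

lemma infDist_range_iterate (h : X ≃ᵢ X) (x : X) {γ L : ℝ → X}
    (hL : IsInvariantAxis h x γ L) {d₁ : ℝ} (hd : d₁ = dist x (h x)) (hd₁ : 0 < d₁)
    (n : ℕ) (y : X) :
    infDist ((⇑h)^[n] y) (Set.range L) = infDist y (Set.range L) := by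
  have hne : (Set.range L).Nonempty := ⟨L 0, 0, rfl⟩
  apply le_antisymm
  · apply le_infDist' hne
    rintro w ⟨u, rfl⟩
    have h1 : (⇑h)^[n] (L u) = L (u + n * d₁) := (L_equivN h x hL hd hd₁ n u).symm
    have h2 : dist ((⇑h)^[n] y) ((⇑h)^[n] (L u)) = dist y (L u) := iso_iterate_dist h n y (L u)
    rw [← h2, h1]
    exact infDist_le_dist_of_mem ⟨u + n * d₁, rfl⟩
  · apply le_infDist' hne
    rintro w ⟨u, rfl⟩
    have h1 : L u = (⇑h)^[n] (L (u - n * d₁)) := by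
      rw [← L_equivN h x hL hd hd₁ n (u - n * d₁)]
      congr 1
      ring
    rw [h1, iso_iterate_dist]
    exact infDist_le_dist_of_mem ⟨u - n * d₁, rfl⟩

lemma quasiProj_iterate (h : X ≃ᵢ X) (x : X) {γ L : ℝ → X}
    (hL : IsInvariantAxis h x γ L) {d₁ : ℝ} (hd : d₁ = dist x (h x)) (hd₁ : 0 < d₁)
    {ε : ℝ} (n : ℕ) {y p : X} (hp : p ∈ quasiProj (Set.range L) ε y) :
    (⇑h)^[n] p ∈ quasiProj (Set.range L) ε ((⇑h)^[n] y) := by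
  obtain ⟨u, rfl⟩ := hp.1
  constructor
  · rw [← L_equivN h x hL hd hd₁ n u]
    exact ⟨u + n * d₁, rfl⟩
  · rw [iso_iterate_dist, infDist_range_iterate h x hL hd hd₁]
    exact hp.2

lemma quasiProj_nonempty {L : ℝ → X} {ε : ℝ} (hε : 0 < ε) (y : X) :
    (quasiProj (Set.range L) ε y).Nonempty := by
  have hne : (Set.range L).Nonempty := ⟨L 0, 0, rfl⟩
  obtain ⟨w, hw, hd⟩ := (infDist_lt_iff hne).mp
    (by linarith : infDist y (Set.range L) < infDist y (Set.range L) + ε)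
  exact ⟨w, hw, hd.le⟩
end projlower

/-- **Theorem 6.2 (bounded projection implies linear growth)**: if `Y` has bounded
projection with respect to the hyperbolic isometry `h`, then
`|d(Y, hⁿ(Y)) - n·α(h)| ≤ K` for all `n`. -/
theorem bounded_projection_implies_linear_growth {X : Type*} [MetricSpace X]
    (δ : ℝ) (hδ : 0 ≤ δ)
    (hgeo : GeodesicSpace X) (hhyp : DeltaHyperbolic X δ)
    (h : X ≃ᵢ X) (x : X) (hα : 0 < avgDisp h x)
    (γ L : ℝ → X) (hL : IsInvariantAxis h x γ L)
    (Y : Set X) (hYne : Y.Nonempty)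
    (hbp : ∃ ε > 0, Bornology.IsBounded (⋃ y ∈ Y, quasiProj (Set.range L) ε y)) :
    ∃ K : ℝ, 0 ≤ K ∧
      ∀ n : ℕ, |setDist Y ((⇑h)^[n] '' Y) - (n : ℝ) * avgDisp h x| ≤ K := by
  have hd : dist x (h x) = dist x (h x) := rfl
  have hd₁ : 0 < dist x (h x) := by
    have h1 : avgDisp h x ≤ dist x (h x) := by
      have := avgDisp_le h x 1
      simpa using this
    linarith
  obtain ⟨ε, hε, hbdd⟩ := hbp
  obtain ⟨C₂, hC₂0, hC₂⟩ := proj_lower hδ hgeo hhyp h x hL hd hd₁ hα hε.le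
  obtain ⟨C₀, hC₀0, hC₀⟩ := disp_upper hδ hgeo hhyp h x hL hd hd₁ hα
  obtain ⟨y₀, hy₀⟩ := hYne
  obtain ⟨p₀, hp₀⟩ := quasiProj_nonempty (L := L) hε y₀
  obtain ⟨D, hD⟩ := Metric.isBounded_iff.mp hbdd
  have hp₀P : p₀ ∈ ⋃ y ∈ Y, quasiProj (Set.range L) ε y := Set.mem_biUnion hy₀ hp₀
  have hD0 : 0 ≤ D := le_trans dist_nonneg (hD hp₀P hp₀P)
  set K : ℝ := 2 * dist x y₀ + C₀ + 2 * dist x p₀ + 2 * D + C₂ with hK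
  have hK0 : 0 ≤ K := by
    rw [hK]
    have := dist_nonneg (x := x) (y := y₀)
    have := dist_nonneg (x := x) (y := p₀)
    linarith
  refine ⟨K, hK0, ?_⟩
  intro n
  have hmem0 : dist y₀ ((⇑h)^[n] y₀) ∈ Set.image2 dist Y ((⇑h)^[n] '' Y) :=
    Set.mem_image2_of_mem hy₀ (Set.mem_image_of_mem _ hy₀)
  have hne : (Set.image2 dist Y ((⇑h)^[n] '' Y)).Nonempty := ⟨_, hmem0⟩
  have hbdd0 : BddBelow (Set.image2 dist Y ((⇑h)^[n] '' Y)) := by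
    refine ⟨0, ?_⟩
    rintro z ⟨y, _, w, _, rfl⟩
    exact dist_nonneg
  rw [abs_le]
  constructor
  · -- lower bound
    have hlow : ∀ z ∈ Set.image2 dist Y ((⇑h)^[n] '' Y),
        (n:ℝ) * avgDisp h x - K ≤ z := by
      rintro z ⟨y, hy, w, ⟨y', hy', rfl⟩, rfl⟩
      obtain ⟨py, hpy⟩ := quasiProj_nonempty (L := L) hε y
      obtain ⟨py', hpy'⟩ := quasiProj_nonempty (L := L) hε y'
      have hq := quasiProj_iterate h x hL hd hd₁ n hpy'
      have hP2 : dist py ((⇑h)^[n] py') - C₂ ≤ dist y ((⇑h)^[n] y') :=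
        hC₂ y ((⇑h)^[n] y') py ((⇑h)^[n] py') hpy hq
      have hpyP : py ∈ ⋃ y ∈ Y, quasiProj (Set.range L) ε y := Set.mem_biUnion hy hpy
      have hpy'P : py' ∈ ⋃ y ∈ Y, quasiProj (Set.range L) ε y := Set.mem_biUnion hy' hpy'
      have hd1 : dist p₀ py ≤ D := hD hp₀P hpyP
      have hd2 : dist p₀ py' ≤ D := hD hp₀P hpy'P
      have hd2' : dist ((⇑h)^[n] p₀) ((⇑h)^[n] py') ≤ D := by
        rw [iso_iterate_dist]; exact hd2
      have hiter : dist ((⇑h)^[n] x) ((⇑h)^[n] p₀) = dist x p₀ := iso_iterate_dist h n x p₀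
      have hx0 : (n:ℝ) * avgDisp h x ≤ dist x ((⇑h)^[n] x) := nsmul_avgDisp_le h x n
      have t1 : dist x ((⇑h)^[n] x) ≤ dist x p₀ + dist p₀ ((⇑h)^[n] p₀) +
          dist ((⇑h)^[n] p₀) ((⇑h)^[n] x) := by
        linarith [dist_triangle x p₀ ((⇑h)^[n] x),
          dist_triangle p₀ ((⇑h)^[n] p₀) ((⇑h)^[n] x)]
      have t2 : dist p₀ ((⇑h)^[n] p₀) ≤ dist p₀ py + dist py ((⇑h)^[n] py') +
          dist ((⇑h)^[n] py') ((⇑h)^[n] p₀) := by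
        linarith [dist_triangle p₀ py ((⇑h)^[n] p₀),
          dist_triangle py ((⇑h)^[n] py') ((⇑h)^[n] p₀)]
      have hcm1 : dist ((⇑h)^[n] p₀) ((⇑h)^[n] x) = dist x p₀ := by
        rw [dist_comm]; exact hiter
      have hcm2 : dist ((⇑h)^[n] py') ((⇑h)^[n] p₀) = dist ((⇑h)^[n] p₀) ((⇑h)^[n] py') :=
        dist_comm _ _
      rw [hK]
      linarith [dist_nonneg (x := x) (y := y₀)]
    have hsd : setDist Y ((⇑h)^[n] '' Y) = sInf (Set.image2 dist Y ((⇑h)^[n] '' Y)) := rfl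
    rw [hsd]
    linarith [le_csInf hne hlow]
  · -- upper bound
    have hup : setDist Y ((⇑h)^[n] '' Y) ≤ dist y₀ ((⇑h)^[n] y₀) := csInf_le hbdd0 hmem0
    have t1 : dist y₀ ((⇑h)^[n] y₀) ≤ dist y₀ x + dist x ((⇑h)^[n] x) +
        dist ((⇑h)^[n] x) ((⇑h)^[n] y₀) := by
      linarith [dist_triangle y₀ x ((⇑h)^[n] y₀),
        dist_triangle x ((⇑h)^[n] x) ((⇑h)^[n] y₀)]
    have t2 : dist ((⇑h)^[n] x) ((⇑h)^[n] y₀) = dist x y₀ := iso_iterate_dist h n x y₀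
    have t3 : dist y₀ x = dist x y₀ := dist_comm _ _
    have t4 := hC₀ n
    rw [hK]
    linarith [dist_nonneg (x := x) (y := p₀)]
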